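/- Every vertex of the bipartite no-signalling polytope with two d-valued inputs per party, all of whose single-party marginals are nonzero (a full-output vertex), is equivalent under local relabellings of inputs and outputs to the box p(ab|XY) = 1/k if (b − a) mod k = X·Y with a,b ∈ {0,…,k−1}, and 0 otherwise, for some k with 2 ≤ k ≤ d, together with the local deterministic boxes. -/

import Mathlib

/-- The no-signalling polytope for two inputs per party, `d` outputs each. -/
def NSPolytope (d : ℕ) : Set (Fin 2 → Fin 2 → Fin d → Fin d → ℝ) :=
  {p | (∀ X Y a b, 0 ≤ p X Y a b) ∧
       (∀ X Y, ∑ a, ∑ b, p X Y a b = 1) ∧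
       (∀ X a, ∀ Y Y' : Fin 2, ∑ b, p X Y a b = ∑ b, p X Y' a b) ∧
       (∀ Y b, ∀ X X' : Fin 2, ∑ a, p X Y a b = ∑ a, p X' Y a b)}

/-- The `k`-box, viewed inside the `d`-output polytope (`k ≤ d`):
`p(ab|XY) = 1/k` if `a,b < k` and `(b − a) mod k = X·Y`, else `0`. -/
noncomputable def kBox (d k : ℕ) : Fin 2 → Fin 2 → Fin d → Fin d → ℝ :=
  fun X Y a b =>
    if a.val < k ∧ b.val < k ∧ (b.val + (k - a.val)) % k = X.val * Y.val
    then 1 / (k : ℝ) else 0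

section aux
variable (d : ℕ) (p : Fin 2 → Fin 2 → Fin d → Fin d → ℝ)

/-- extension by zero from the support of `p`. -/
noncomputable def Eaux :
    ({i : Fin 2 × Fin 2 × Fin d × Fin d // p i.1 i.2.1 i.2.2.1 i.2.2.2 ≠ 0} → ℝ)
      →ₗ[ℝ] (Fin 2 → Fin 2 → Fin d → Fin d → ℝ) where
  toFun v := fun X Y a b =>
    if h : p X Y a b ≠ 0 then v ⟨(X, Y, a, b), h⟩ else 0
  map_add' v w := by
    funext X Y a b; by_cases h : p X Y a b = 0 <;> simp [h]
  map_smul' c v := by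
    funext X Y a b; by_cases h : p X Y a b = 0 <;> simp [h]

/-- marginal-difference / normalization map. -/
noncomputable def Ψaux :
    (Fin 2 → Fin 2 → Fin d → Fin d → ℝ)
      →ₗ[ℝ] ((Fin 2 → Fin d → ℝ) × (Fin 2 → Fin d → ℝ) × ℝ) where
  toFun q :=
    (fun X a => (∑ b, q X 0 a b) - ∑ b, q X 1 a b,
     fun Y b => (∑ a, q 0 Y a b) - ∑ a, q 1 Y a b,
     ∑ a, ∑ b, q 0 0 a b)
  map_add' q r := by
    refine Prod.ext (funext fun X => funext fun a => ?_)
      (Prod.ext (funext fun Y => funext fun b => ?_) ?_) <;>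
    simp [Prod.fst_add, Prod.snd_add, Pi.add_apply, Finset.sum_add_distrib] <;> ring
  map_smul' c q := by
    refine Prod.ext (funext fun X => funext fun a => ?_)
      (Prod.ext (funext fun Y => funext fun b => ?_) ?_) <;>
    simp [Prod.smul_fst, Prod.smul_snd, Pi.smul_apply, smul_eq_mul,
      ← Finset.mul_sum] <;> ring

noncomputable def Laux :
    ((Fin 2 → Fin d → ℝ) × (Fin 2 → Fin d → ℝ) × ℝ) →ₗ[ℝ] ℝ where
  toFun c := (∑ a, c.1 0 a) - (∑ a, c.1 1 a) - (∑ b, c.2.1 0 b) + (∑ b, c.2.1 1 b)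
  map_add' c c' := by
    simp [Prod.fst_add, Prod.snd_add, Pi.add_apply, Finset.sum_add_distrib]; ring
  map_smul' r c := by
    simp [Prod.smul_fst, Prod.smul_snd, Pi.smul_apply, smul_eq_mul, ← Finset.mul_sum]
    ring

end aux

lemma exists_pert {d : ℕ} (hd : 0 < d) (p : Fin 2 → Fin 2 → Fin d → Fin d → ℝ)
    (hS : 4 * d + 1 ≤ (Finset.univ.filter
      (fun i : Fin 2 × Fin 2 × Fin d × Fin d =>
        p i.1 i.2.1 i.2.2.1 i.2.2.2 ≠ 0)).card) :
    ∃ q : Fin 2 → Fin 2 → Fin d → Fin d → ℝ, q ≠ 0 ∧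
      (∀ X Y a b, p X Y a b = 0 → q X Y a b = 0) ∧
      (∀ X a, ∑ b, q X 0 a b = ∑ b, q X 1 a b) ∧
      (∀ Y b, ∑ a, q 0 Y a b = ∑ a, q 1 Y a b) ∧
      (∀ X Y, ∑ a, ∑ b, q X Y a b = 0) := by
  have hLw : Laux d (0, (fun Y _ => if Y = 0 then (1 : ℝ) else 0), 0) = -(d : ℝ) := by
    simp [Laux]
  have hLsurj : Function.Surjective (Laux d) := by
    intro y
    refine ⟨(y / -(d : ℝ)) • (0, (fun Y _ => if Y = 0 then (1 : ℝ) else 0), 0), ?_⟩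
    rw [map_smul, hLw, smul_eq_mul]
    have : -(d:ℝ) ≠ 0 := by
      simpa using hd.ne'
    field_simp
  have hdC : Module.finrank ℝ ((Fin 2 → Fin d → ℝ) × (Fin 2 → Fin d → ℝ) × ℝ)
      = 4 * d + 1 := by
    rw [Module.finrank_prod, Module.finrank_prod]
    have h2 : Module.finrank ℝ (Fin 2 → Fin d → ℝ) = 2 * d := by
      rw [Module.finrank_pi_fintype]
      simp [Module.finrank_pi]
    rw [h2, Module.finrank_self]
    ring
  have hker : Module.finrank ℝ (LinearMap.ker (Laux d)) = 4 * d := by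
    have h := LinearMap.finrank_range_add_finrank_ker (Laux d)
    rw [LinearMap.range_eq_top.2 hLsurj, hdC] at h
    simp only [finrank_top, Module.finrank_self] at h
    omega
  have hrange : ∀ v, ((Ψaux d).comp (Eaux d p)) v ∈ LinearMap.ker (Laux d) := by
    intro v
    set q := Eaux d p v with hq
    simp only [LinearMap.mem_ker, LinearMap.comp_apply]
    show (∑ a, ((∑ b, q 0 0 a b) - ∑ b, q 0 1 a b))
        - (∑ a, ((∑ b, q 1 0 a b) - ∑ b, q 1 1 a b))
        - (∑ b, ((∑ a, q 0 0 a b) - ∑ a, q 1 0 a b))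
        + (∑ b, ((∑ a, q 0 1 a b) - ∑ a, q 1 1 a b)) = 0
    simp only [Finset.sum_sub_distrib]
    rw [Finset.sum_comm (f := fun a b => q 0 0 a b),
        Finset.sum_comm (f := fun a b => q 1 0 a b),
        Finset.sum_comm (f := fun a b => q 0 1 a b),
        Finset.sum_comm (f := fun a b => q 1 1 a b)]
    ring
  set Φ := ((Ψaux d).comp (Eaux d p)).codRestrict (LinearMap.ker (Laux d)) hrange with hΦ
  have hkerΦ : LinearMap.ker Φ ≠ ⊥ := by
    intro hbot
    have hinj : Function.Injective Φ := LinearMap.ker_eq_bot.1 hbot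
    have hle := LinearMap.finrank_le_finrank_of_injective hinj
    rw [hker, Module.finrank_pi, Fintype.card_subtype] at hle
    omega
  obtain ⟨v, hv, hv0⟩ := (Submodule.ne_bot_iff _).1 hkerΦ
  have hΨE : Ψaux d (Eaux d p v) = 0 := congrArg Subtype.val (LinearMap.mem_ker.1 hv)
  refine ⟨Eaux d p v, ?_, ?_, ?_, ?_, ?_⟩
  · -- nonzero
    intro h0
    apply hv0
    funext s
    have hcomp : Eaux d p v s.1.1 s.1.2.1 s.1.2.2.1 s.1.2.2.2 = v s := by
      show (if h : p s.1.1 s.1.2.1 s.1.2.2.1 s.1.2.2.2 ≠ 0 then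
        v ⟨(s.1.1, s.1.2.1, s.1.2.2.1, s.1.2.2.2), h⟩ else 0) = v s
      have hs : (s.1.1, s.1.2.1, s.1.2.2.1, s.1.2.2.2) = s.1 := rfl
      rw [dif_pos (hs ▸ s.2)]
    rw [h0] at hcomp
    simpa using hcomp.symm
  · intro X Y a b hp0
    show (if h : p X Y a b ≠ 0 then v ⟨(X, Y, a, b), h⟩ else 0) = 0
    simp [hp0]
  all_goals {
    have h1 := congrArg Prod.fst hΨE
    have h2 := congrArg (Prod.fst ∘ Prod.snd) hΨE
    have h3 := congrArg (Prod.snd ∘ Prod.snd) hΨE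
    simp only [Ψaux, LinearMap.coe_mk, AddHom.coe_mk, Function.comp_apply, Prod.fst_zero,
      Prod.snd_zero] at h1 h2 h3
    have hrow : ∀ X a, (∑ b, Eaux d p v X 0 a b) = ∑ b, Eaux d p v X 1 a b := by
      intro X a
      have := congrFun (congrFun h1 X) a
      rw [Pi.zero_apply, Pi.zero_apply] at this
      linarith [this]
    have hcol : ∀ Y b, (∑ a, Eaux d p v 0 Y a b) = ∑ a, Eaux d p v 1 Y a b := by
      intro Y b
      have := congrFun (congrFun h2 Y) b
      rw [Pi.zero_apply, Pi.zero_apply] at this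
      linarith [this]
    have h00 : (∑ a, ∑ b, Eaux d p v 0 0 a b) = 0 := h3
    have h01 : (∑ a, ∑ b, Eaux d p v 0 1 a b) = 0 :=
      (Finset.sum_congr rfl fun a _ => (hrow 0 a).symm).trans h00
    have h10 : (∑ a, ∑ b, Eaux d p v 1 0 a b) = 0 := by
      calc (∑ a, ∑ b, Eaux d p v 1 0 a b) = ∑ b, ∑ a, Eaux d p v 1 0 a b :=
            Finset.sum_comm
        _ = ∑ b, ∑ a, Eaux d p v 0 0 a b :=
            Finset.sum_congr rfl fun b _ => (hcol 0 b).symm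
        _ = ∑ a, ∑ b, Eaux d p v 0 0 a b := Finset.sum_comm
        _ = 0 := h00
    have h11 : (∑ a, ∑ b, Eaux d p v 1 1 a b) = 0 :=
      (Finset.sum_congr rfl fun a _ => (hrow 1 a).symm).trans h10
    first
    | exact hrow
    | exact hcol
    | (intro X Y; fin_cases X <;> fin_cases Y <;> assumption)
  }

lemma NS_pert {d : ℕ} {p q : Fin 2 → Fin 2 → Fin d → Fin d → ℝ}
    (hext : p ∈ (NSPolytope d).extremePoints ℝ)
    (hsupp : ∀ X Y a b, p X Y a b = 0 → q X Y a b = 0)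
    (hrow : ∀ X a, ∑ b, q X 0 a b = ∑ b, q X 1 a b)
    (hcol : ∀ Y b, ∑ a, q 0 Y a b = ∑ a, q 1 Y a b)
    (hnorm : ∀ X Y, ∑ a, ∑ b, q X Y a b = 0) : q = 0 := by
  rcases Nat.eq_zero_or_pos d with rfl | hd
  · funext X Y a b; exact a.elim0
  have : NeZero d := ⟨hd.ne'⟩
  obtain ⟨hp, hex⟩ := hext
  obtain ⟨hpos, hnrm, hrowp, hcolp⟩ := hp
  by_contra hq0
  classical
  set ι := Fin 2 × Fin 2 × Fin d × Fin d with hι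
  have hne : (Finset.univ : Finset ι).Nonempty := Finset.univ_nonempty
  set g : ι → ℝ := fun i =>
    if q i.1 i.2.1 i.2.2.1 i.2.2.2 = 0 then 1
    else p i.1 i.2.1 i.2.2.1 i.2.2.2 / |q i.1 i.2.1 i.2.2.1 i.2.2.2| with hg
  set ε := Finset.univ.inf' hne g with hε
  have hgpos : ∀ i : ι, 0 < g i := by
    intro i
    rw [hg]
    dsimp only
    split_ifs with h
    · norm_num
    · apply div_pos
      · rcases (hpos i.1 i.2.1 i.2.2.1 i.2.2.2).eq_or_lt with h2 | h2
        · exact absurd (hsupp _ _ _ _ h2.symm) h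
        · exact h2
      · exact abs_pos.2 h
  have hεpos : 0 < ε := by
    rw [hε, Finset.lt_inf'_iff]
    exact fun i _ => hgpos i
  have hb : ∀ X Y a b, ε * |q X Y a b| ≤ p X Y a b := by
    intro X Y a b
    by_cases h : q X Y a b = 0
    · simp [h]; exact hpos X Y a b
    · have h1 : ε ≤ g (X, Y, a, b) := Finset.inf'_le _ (Finset.mem_univ _)
      rw [hg] at h1
      dsimp only at h1
      rw [if_neg h] at h1
      have h2 : 0 < |q X Y a b| := abs_pos.2 h
      calc ε * |q X Y a b| ≤ (p X Y a b / |q X Y a b|) * |q X Y a b| := by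
            exact mul_le_mul_of_nonneg_right h1 h2.le
        _ = p X Y a b := div_mul_cancel₀ _ h2.ne'
  have hmem : ∀ s : ℝ, |s| = 1 → p + (s * ε) • q ∈ NSPolytope d := by
    intro s hs
    refine ⟨?_, ?_, ?_, ?_⟩
    · intro X Y a b
      have h1 := hb X Y a b
      have h2 : |s * ε * q X Y a b| = ε * |q X Y a b| := by
        rw [abs_mul, abs_mul, hs, abs_of_pos hεpos, one_mul]
      have h3 := neg_abs_le (s * ε * q X Y a b)
      simp only [Pi.add_apply, Pi.smul_apply, smul_eq_mul]
      nlinarith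
    · intro X Y
      simp only [Pi.add_apply, Pi.smul_apply, smul_eq_mul]
      rw [show ∀ f g : Fin d → Fin d → ℝ, (∑ a, ∑ b, (f a b + g a b)) = (∑ a, ∑ b, f a b) + ∑ a, ∑ b, g a b from fun f g => by
        rw [← Finset.sum_add_distrib]; exact Finset.sum_congr rfl fun a _ => Finset.sum_add_distrib]
      rw [show (∑ a, ∑ b, s * ε * q X Y a b) = s * ε * ∑ a, ∑ b, q X Y a b from by
        rw [Finset.mul_sum]; exact Finset.sum_congr rfl fun a _ => (Finset.mul_sum _ _ _).symm]
      rw [hnorm X Y, hnrm X Y]; ring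
    · intro X a Y Y'
      have hq' : ∀ Y : Fin 2, ∑ b, q X Y a b = ∑ b, q X 0 a b := by
        intro Y; fin_cases Y; · rfl
        · exact (hrow X a).symm
      simp only [Pi.add_apply, Pi.smul_apply, smul_eq_mul]
      rw [Finset.sum_add_distrib, Finset.sum_add_distrib, ← Finset.mul_sum, ← Finset.mul_sum,
        hrowp X a Y Y', hq' Y, hq' Y']
    · intro Y b X X'
      have hq' : ∀ X : Fin 2, ∑ a, q X Y a b = ∑ a, q 0 Y a b := by
        intro X; fin_cases X; · rfl
        · exact (hcol Y b).symm
      simp only [Pi.add_apply, Pi.smul_apply, smul_eq_mul]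
      rw [Finset.sum_add_distrib, Finset.sum_add_distrib, ← Finset.mul_sum, ← Finset.mul_sum,
        hcolp Y b X X', hq' X, hq' X']
  have hm1 : p + (1 * ε) • q ∈ NSPolytope d := hmem 1 (by norm_num)
  have hm2 : p + ((-1) * ε) • q ∈ NSPolytope d := hmem (-1) (by norm_num)
  have hseg : p ∈ openSegment ℝ (p + (1 * ε) • q) (p + ((-1) * ε) • q) := by
    refine ⟨1/2, 1/2, by norm_num, by norm_num, by norm_num, ?_⟩
    module
  have := hex hm1 hm2 hseg
  have hz : (1 * ε) • q = 0 := by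
    have := congrArg (fun x => x - p) this
    simpa [add_sub_cancel_left] using this
  rw [smul_eq_zero] at hz
  rcases hz with h | h
  · exact absurd h (by simpa using hεpos.ne')
  · exact hq0 h

lemma mod2split {d x : ℕ} (h : x < 2 * d) :
    x % d = x ∧ x < d ∨ x % d = x - d ∧ d ≤ x := by
  rcases Nat.lt_or_ge x d with h1 | h1
  · exact Or.inl ⟨Nat.mod_eq_of_lt h1, h1⟩
  · refine Or.inr ⟨?_, h1⟩
    rw [Nat.mod_eq_sub_mod h1, Nat.mod_eq_of_lt (by omega)]

lemma modkey {d : ℕ} (a b : Fin d) {v : ℕ} (hv : v < d) :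
    (b.val + (d - a.val)) % d = v ↔ b.val = (a.val + v) % d := by
  have ha := a.isLt
  have hb := b.isLt
  have h1 := mod2split (d := d) (x := b.val + (d - a.val)) (by omega)
  have h2 := mod2split (d := d) (x := a.val + v) (by omega)
  rcases h1 with ⟨e1, l1⟩ | ⟨e1, l1⟩ <;> rcases h2 with ⟨e2, l2⟩ | ⟨e2, l2⟩ <;>
    rw [e1, e2] <;> omega

lemma isCycle_finRotate' {d : ℕ} (h : 2 ≤ d) : (finRotate d).IsCycle := by
  obtain ⟨m, rfl⟩ : ∃ m, d = m + 2 := ⟨d - 2, by omega⟩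
  exact isCycle_finRotate

lemma support_finRotate' {d : ℕ} (h : 2 ≤ d) : (finRotate d).support = Finset.univ := by
  obtain ⟨m, rfl⟩ : ∃ m, d = m + 2 := ⟨d - 2, by omega⟩
  exact support_finRotate

lemma finRotate_val {d : ℕ} (h : 2 ≤ d) (x : Fin d) :
    (finRotate d x).val = (x.val + 1) % d := by
  obtain ⟨m, rfl⟩ : ∃ m, d = m + 2 := ⟨d - 2, by omega⟩
  rw [finRotate_succ_apply, Fin.add_def, Fin.val_one]

/-- every vertex (extreme point) of the two-input `d`-output
no-signalling polytope whose single-party marginals are all nonzero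
(full-output vertex) is, up to local relabellings of inputs and of outputs
(the latter possibly conditioned on the input), either a local deterministic
box or the `k`-box for some `2 ≤ k ≤ d`. -/
theorem full_output_vertices_classification (d : ℕ)
    (p : Fin 2 → Fin 2 → Fin d → Fin d → ℝ)
    (hext : p ∈ (NSPolytope d).extremePoints ℝ)
    (hfullA : ∀ X Y a, ∑ b, p X Y a b ≠ 0)
    (hfullB : ∀ X Y b, ∑ a, p X Y a b ≠ 0) :
    (∃ f g : Fin 2 → Fin d,
        ∀ X Y a b, p X Y a b = if a = f X ∧ b = g Y then 1 else 0) ∨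
    (∃ k, 2 ≤ k ∧ k ≤ d ∧
      ∃ (σA σB : Fin 2 ≃ Fin 2) (πA πB : Fin 2 → (Fin d ≃ Fin d)),
        ∀ X Y a b,
          p (σA X) (σB Y) (πA X a) (πB Y b) = kBox d k X Y a b) := by
  classical
  have hpmem := hext.1
  obtain ⟨hpos, hnrm, hrowp, hcolp⟩ := hpmem
  by_cases hd2 : 2 ≤ d
  swap
  · -- degenerate cases d = 0, 1
    interval_cases d
    · exact absurd (hnrm 0 0) (by simp)
    · left
      refine ⟨fun _ => 0, fun _ => 0, fun X Y a b => ?_⟩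
      have h1 := hnrm X Y
      rw [Fin.sum_univ_one] at h1
      rw [Fin.sum_univ_one] at h1
      have ha : a = 0 := Subsingleton.elim a 0
      have hb : b = 0 := Subsingleton.elim b 0
      subst ha; subst hb
      rw [if_pos ⟨rfl, rfl⟩]
      exact h1
  -- main case
  have hd0 : 0 < d := by omega
  haveI hNZ : NeZero d := ⟨by omega⟩
  set rs : Fin 2 → Fin 2 → Fin d → Finset (Fin d) :=
    fun X Y a => Finset.univ.filter (fun b => p X Y a b ≠ 0) with hrs
  set cs : Fin 2 → Fin 2 → Fin d → Finset (Fin d) :=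
    fun X Y b => Finset.univ.filter (fun a => p X Y a b ≠ 0) with hcs
  have hrs1le : ∀ X Y a, 1 ≤ (rs X Y a).card := by
    intro X Y a
    rw [Nat.one_le_iff_ne_zero, ← Nat.pos_iff_ne_zero, Finset.card_pos]
    by_contra h
    rw [Finset.not_nonempty_iff_eq_empty, Finset.filter_eq_empty_iff] at h
    refine hfullA X Y a (Finset.sum_eq_zero fun b _ => ?_)
    have := h (Finset.mem_univ b); simpa using this
  have hcs1le : ∀ X Y b, 1 ≤ (cs X Y b).card := by
    intro X Y b
    rw [Nat.one_le_iff_ne_zero, ← Nat.pos_iff_ne_zero, Finset.card_pos]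
    by_contra h
    rw [Finset.not_nonempty_iff_eq_empty, Finset.filter_eq_empty_iff] at h
    refine hfullB X Y b (Finset.sum_eq_zero fun a _ => ?_)
    have := h (Finset.mem_univ a); simpa using this
  have hrc : ∀ X Y, (∑ a, (rs X Y a).card) = ∑ b, (cs X Y b).card := by
    intro X Y
    simp only [hrs, hcs, Finset.card_filter]
    exact Finset.sum_comm
  have hTot : (Finset.univ.filter
      (fun i : Fin 2 × Fin 2 × Fin d × Fin d =>
        p i.1 i.2.1 i.2.2.1 i.2.2.2 ≠ 0)).card
      = ∑ i : Fin 2 × Fin 2, ∑ a, (rs i.1 i.2 a).card := by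
    simp only [hrs, Finset.card_filter, Fintype.sum_prod_type]
  have hsingle : (∀ X Y a, (rs X Y a).card = 1) ∧ (∀ X Y b, (cs X Y b).card = 1) := by
    by_contra hbad
    have hed : ∀ X Y, d ≤ ∑ a, (rs X Y a).card := by
      intro X Y
      calc d = ∑ _a : Fin d, 1 := by simp
        _ ≤ _ := Finset.sum_le_sum fun a _ => hrs1le X Y a
    have hbig : ∃ X₀ Y₀, d + 1 ≤ ∑ a, (rs X₀ Y₀ a).card := by
      have key : ∀ (f : Fin d → ℕ) (a₀ : Fin d), (∀ a, 1 ≤ f a) → 2 ≤ f a₀ →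
          d + 1 ≤ ∑ a, f a := by
        intro f a₀ h1 h2
        have he := Finset.add_sum_erase Finset.univ f (Finset.mem_univ a₀)
        have hcardle : (Finset.univ.erase a₀).card = d - 1 := by
          rw [Finset.card_erase_of_mem (Finset.mem_univ a₀)]
          simp
        have h3 : (d - 1) ≤ ∑ a ∈ Finset.univ.erase a₀, f a := by
          calc d - 1 = ∑ _a ∈ Finset.univ.erase a₀, 1 := by
                rw [Finset.sum_const, smul_eq_mul, mul_one, hcardle]
            _ ≤ _ := Finset.sum_le_sum fun a _ => h1 a
        omega
      rcases not_and_or.1 hbad with h | h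
      · push_neg at h
        obtain ⟨X₀, Y₀, a₀, ha₀⟩ := h
        exact ⟨X₀, Y₀, key _ a₀ (hrs1le X₀ Y₀) (by have := hrs1le X₀ Y₀ a₀; omega)⟩
      · push_neg at h
        obtain ⟨X₀, Y₀, b₀, hb₀⟩ := h
        refine ⟨X₀, Y₀, ?_⟩
        rw [hrc X₀ Y₀]
        exact key _ b₀ (hcs1le X₀ Y₀) (by have := hcs1le X₀ Y₀ b₀; omega)
    obtain ⟨X₀, Y₀, hbig⟩ := hbig
    have hS : 4 * d + 1 ≤ (Finset.univ.filter
        (fun i : Fin 2 × Fin 2 × Fin d × Fin d =>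
          p i.1 i.2.1 i.2.2.1 i.2.2.2 ≠ 0)).card := by
      rw [hTot]
      have h4 : (∑ _i : Fin 2 × Fin 2, d) < ∑ i : Fin 2 × Fin 2, ∑ a, (rs i.1 i.2 a).card :=
        Finset.sum_lt_sum (fun i _ => hed i.1 i.2)
          ⟨(X₀, Y₀), Finset.mem_univ _, lt_of_lt_of_le (Nat.lt_succ_self d) hbig⟩
      rw [Finset.sum_const, Finset.card_univ] at h4
      simp only [Fintype.card_prod, Fintype.card_fin, smul_eq_mul] at h4
      omega
    obtain ⟨q, hq0, hqsupp, hqrow, hqcol, hqnorm⟩ := exists_pert hd0 p hS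
    exact hq0 (NS_pert hext hqsupp hqrow hqcol hqnorm)
  obtain ⟨hrow1, hcol1⟩ := hsingle
  have hμex : ∀ X Y a, ∃ b, rs X Y a = {b} :=
    fun X Y a => Finset.card_eq_one.1 (hrow1 X Y a)
  choose μ hμ using hμex
  have hmem : ∀ X Y a b, p X Y a b ≠ 0 ↔ b = μ X Y a := by
    intro X Y a b
    constructor
    · intro h
      have hb : b ∈ rs X Y a := by simp [hrs, h]
      rw [hμ X Y a] at hb
      simpa using hb
    · intro h
      have hb : μ X Y a ∈ rs X Y a := by rw [hμ X Y a]; simp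
      rw [h]
      simp only [hrs, Finset.mem_filter] at hb
      exact hb.2
  have hinj : ∀ X Y, Function.Injective (μ X Y) := by
    intro X Y a a' h
    by_contra hne
    have h2 : ({a, a'} : Finset (Fin d)) ⊆ cs X Y (μ X Y a) := by
      intro x hx
      simp only [Finset.mem_insert, Finset.mem_singleton] at hx
      simp only [hcs, Finset.mem_filter, Finset.mem_univ, true_and]
      rcases hx with rfl | rfl
      · exact (hmem X Y x (μ X Y x)).2 rfl |> fun h => by
          intro hzero; exact ((hmem X Y x (μ X Y x)).2 rfl) hzero
      · intro hzero
        rw [h] at hzero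
        exact ((hmem X Y x (μ X Y x)).2 rfl) hzero
    have h3 := Finset.card_le_card h2
    rw [Finset.card_pair hne, hcol1 X Y] at h3
    omega
  have hbij : ∀ X Y, Function.Bijective (μ X Y) :=
    fun X Y => Finite.injective_iff_bijective.1 (hinj X Y)
  set μb : Fin 2 → Fin 2 → (Fin d ≃ Fin d) :=
    fun X Y => Equiv.ofBijective (μ X Y) (hbij X Y) with hμb
  have hμbapp : ∀ X Y a, μb X Y a = μ X Y a := fun X Y a => rfl
  have hsumrow : ∀ X Y a, (∑ b, p X Y a b) = p X Y a (μ X Y a) := by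
    intro X Y a
    refine Finset.sum_eq_single (μ X Y a) (fun b _ hb => ?_)
      (fun h => absurd (Finset.mem_univ _) h)
    by_contra h
    exact hb ((hmem X Y a b).1 h)
  have hsumcol : ∀ X Y b, (∑ a, p X Y a b) = p X Y ((μb X Y).symm b) b := by
    intro X Y b
    refine Finset.sum_eq_single ((μb X Y).symm b) (fun a _ ha => ?_)
      (fun h => absurd (Finset.mem_univ _) h)
    by_contra h
    have h2 := (hmem X Y a b).1 h
    apply ha
    rw [← hμbapp] at h2
    rw [h2]
    simp
  set α : Fin 2 → Fin d → ℝ := fun X a => p X 0 a (μ X 0 a) with hα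
  have hαval : ∀ X Y a, p X Y a (μ X Y a) = α X a := by
    intro X Y a
    show p X Y a (μ X Y a) = p X 0 a (μ X 0 a)
    rw [← hsumrow, ← hsumrow]
    exact hrowp X a Y 0
  have hαne : ∀ X a, α X a ≠ 0 := by
    intro X a
    show p X 0 a (μ X 0 a) ≠ 0
    rw [← hsumrow]
    exact hfullA X 0 a
  have hkey : ∀ Y b, α 0 ((μb 0 Y).symm b) = α 1 ((μb 1 Y).symm b) := by
    intro Y b
    have h0 : p 0 Y ((μb 0 Y).symm b) b = α 0 ((μb 0 Y).symm b) := by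
      have h := hαval 0 Y ((μb 0 Y).symm b)
      have hb : μ 0 Y ((μb 0 Y).symm b) = b := by
        rw [← hμbapp]; exact (μb 0 Y).apply_symm_apply b
      rw [hb] at h
      exact h
    have h1 : p 1 Y ((μb 1 Y).symm b) b = α 1 ((μb 1 Y).symm b) := by
      have h := hαval 1 Y ((μb 1 Y).symm b)
      have hb : μ 1 Y ((μb 1 Y).symm b) = b := by
        rw [← hμbapp]; exact (μb 1 Y).apply_symm_apply b
      rw [hb] at h
      exact h
    rw [← h0, ← h1, ← hsumcol, ← hsumcol]
    exact hcolp Y b 0 1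
  set σ : Equiv.Perm (Fin d) :=
    (μb 0 0).trans ((μb 1 0).symm.trans ((μb 1 1).trans (μb 0 1).symm)) with hσ
  have hσapp : ∀ a, σ a = (μb 0 1).symm (μb 1 1 ((μb 1 0).symm (μb 0 0 a))) :=
    fun a => rfl
  have hσinv : ∀ a, α 0 (σ a) = α 0 a := by
    intro a
    have h1 : α 0 a = α 1 ((μb 1 0).symm (μb 0 0 a)) := by
      have := hkey 0 (μb 0 0 a)
      simpa using this
    have h2 : α 0 (σ a) = α 1 ((μb 1 1).symm (μb 1 1 ((μb 1 0).symm (μb 0 0 a)))) := by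
      rw [hσapp]
      exact hkey 1 (μb 1 1 ((μb 1 0).symm (μb 0 0 a)))
    rw [h2, Equiv.symm_apply_apply, ← h1]
  -- rigidity
  have hT : ∀ f : Fin d → ℝ, (∀ a, f (σ a) = f a) → (∑ a, f a) = 0 → f = 0 := by
    intro f hfinv hfsum
    by_contra hf0
    set g : Fin 2 → Fin d → ℝ :=
      ![f, fun a => f ((μb 0 0).symm (μb 1 0 a))] with hg
    set q : Fin 2 → Fin 2 → Fin d → Fin d → ℝ :=
      fun X Y a b => if b = μ X Y a then g X a else 0 with hq
    have hqrowsum : ∀ X Y a, (∑ b, q X Y a b) = g X a := by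
      intro X Y a
      rw [hq]
      simp
    have hqcolsum : ∀ X Y b, (∑ a, q X Y a b) = g X ((μb X Y).symm b) := by
      intro X Y b
      rw [hq]
      dsimp only
      refine (Finset.sum_eq_single ((μb X Y).symm b) (fun a _ ha => ?_)
        (fun h => absurd (Finset.mem_univ _) h)).trans ?_
      · rw [if_neg]
        intro hbb
        apply ha
        rw [← hμbapp] at hbb
        rw [hbb]; simp
      · rw [if_pos]
        rw [← hμbapp]
        simp
    have hqne : q ≠ 0 := by
      intro h
      obtain ⟨a₀, ha₀⟩ : ∃ a, f a ≠ 0 := by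
        by_contra hall
        push_neg at hall
        exact hf0 (funext hall)
      have hv : q 0 0 a₀ (μ 0 0 a₀) = f a₀ := by
        rw [hq]; dsimp only; rw [if_pos rfl, hg]
        simp
      rw [h] at hv
      exact ha₀ (by simpa using hv.symm)
    apply hqne
    refine NS_pert hext ?_ ?_ ?_ ?_
    · intro X Y a b hp0
      rw [hq]
      dsimp only
      rw [if_neg]
      intro hbb
      rw [hbb, hαval] at hp0
      exact hαne X a hp0
    · intro X a
      rw [hqrowsum, hqrowsum]
    · intro Y b
      rw [hqcolsum, hqcolsum]
      rw [hg]
      simp only [Matrix.cons_val_zero, Matrix.cons_val_one, Matrix.head_cons]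
      fin_cases Y
      · simp
      · set cc : Fin d := (μb 0 0).symm (μb 1 0 ((μb 1 1).symm b)) with hcc
        have hσc : σ cc = (μb 0 1).symm b := by
          rw [hσapp, hcc]
          simp
        calc f ((μb 0 1).symm b) = f (σ cc) := by rw [hσc]
          _ = f cc := hfinv cc
    · intro X Y
      have hsum : (∑ a, ∑ b, q X Y a b) = ∑ a, g X a :=
        Finset.sum_congr rfl fun a _ => hqrowsum X Y a
      rw [hsum, hg]
      fin_cases X
      · simpa using hfsum
      · simp only [Fin.mk_one, Matrix.cons_val_one, Matrix.head_cons, Matrix.cons_val_zero]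
        rw [show (∑ a, f ((μb 0 0).symm (μb 1 0 a)))
            = ∑ a, f (((μb 1 0).trans (μb 0 0).symm) a) from rfl]
        rw [Equiv.sum_comp ((μb 1 0).trans (μb 0 0).symm) f]
        exact hfsum
  have hαsum : (∑ a, α 0 a) = 1 := by
    rw [show (∑ a, α 0 a) = ∑ a, ∑ b, p 0 0 a b from
      Finset.sum_congr rfl fun a _ => by rw [← hαval 0 0 a, hsumrow]]
    exact hnrm 0 0
  have hdne : (d : ℝ) ≠ 0 := Nat.cast_ne_zero.2 (by omega)
  have hα0const : ∀ a, α 0 a = 1 / d := by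
    have hz := hT (fun a => α 0 a - 1 / d)
      (fun a => by rw [hσinv])
      (by
        rw [Finset.sum_sub_distrib, hαsum, Finset.sum_const, Finset.card_univ,
          Fintype.card_fin, nsmul_eq_mul]
        field_simp
        simp)
    intro a
    have h3 : α 0 a - 1 / d = 0 := congrFun hz a
    linarith
  have hα1const : ∀ a, α 1 a = 1 / d := by
    intro a
    have h := hkey 0 (μb 1 0 a)
    rw [Equiv.symm_apply_apply] at h
    rw [← h, hα0const]
  have hαconst : ∀ X a, α X a = 1 / d := by
    intro X a; fin_cases X
    · exact hα0const a
    · exact hα1const a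
  have hval : ∀ X Y a b, p X Y a b = if b = μb X Y a then 1 / (d:ℝ) else 0 := by
    intro X Y a b
    by_cases h : b = μb X Y a
    · rw [if_pos h]
      rw [hμbapp] at h
      rw [h, hαval, hαconst]
    · rw [if_neg h]
      by_contra hne
      exact h (by rw [hμbapp]; exact (hmem X Y a b).1 hne)
  -- transitivity of σ
  set O : Finset (Fin d) := Finset.univ.filter (fun x => ∃ n : ℕ, (σ ^ n) 0 = x) with hO
  have hO0 : (0 : Fin d) ∈ O := by
    simp only [hO, Finset.mem_filter, Finset.mem_univ, true_and]
    exact ⟨0, by simp⟩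
  have hOiff : ∀ x, σ x ∈ O ↔ x ∈ O := by
    have hfwd : ∀ x, x ∈ O → σ x ∈ O := by
      intro x hx
      simp only [hO, Finset.mem_filter, Finset.mem_univ, true_and] at hx ⊢
      obtain ⟨n, hn⟩ := hx
      exact ⟨n + 1, by rw [pow_succ', Equiv.Perm.mul_apply, hn]⟩
    have hbwd : ∀ y, y ∈ O → σ⁻¹ y ∈ O := by
      intro y hy
      simp only [hO, Finset.mem_filter, Finset.mem_univ, true_and] at hy ⊢
      obtain ⟨n, hn⟩ := hy
      have hord : σ ^ orderOf σ = 1 := pow_orderOf_eq_one σ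
      have ho1 : 1 ≤ orderOf σ := orderOf_pos σ
      refine ⟨(orderOf σ - 1) + n, ?_⟩
      rw [pow_add, Equiv.Perm.mul_apply, hn]
      have hky : σ ((σ ^ (orderOf σ - 1)) y) = y := by
        rw [← Equiv.Perm.mul_apply, ← pow_succ',
          show orderOf σ - 1 + 1 = orderOf σ from by omega, hord,
          Equiv.Perm.one_apply]
      apply σ.injective
      rw [hky, show ∀ x, σ (σ⁻¹ x) = x from fun x => (Equiv.eq_symm_apply σ).mp rfl]
    intro x
    constructor
    · intro h
      have h2 := hbwd _ h
      simpa using h2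
    · exact hfwd x
  have hOuniv : O = Finset.univ := by
    have hfO := hT (fun x => (if x ∈ O then (1:ℝ) else 0) - (O.card : ℝ)/d)
      (fun a => by
        congr 1
        by_cases h : a ∈ O
        · rw [if_pos h, if_pos ((hOiff a).2 h)]
        · rw [if_neg h, if_neg (fun hc => h ((hOiff a).1 hc))])
      (by
        rw [Finset.sum_sub_distrib, Finset.sum_const, Finset.card_univ,
          Fintype.card_fin, nsmul_eq_mul]
        have h5 : (∑ x, if x ∈ O then (1:ℝ) else 0) = O.card := by
          simp [Finset.sum_ite_mem]
        rw [h5]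
        field_simp
        simp)
    have h0 : (if (0 : Fin d) ∈ O then (1:ℝ) else 0) - (O.card : ℝ)/d = 0 :=
      congrFun hfO 0
    rw [if_pos hO0] at h0
    have hc' : (1:ℝ) - (O.card : ℝ)/d = 0 := h0
    have hcard : (O.card : ℝ) = d := by
      field_simp at hc'
      linarith
    have hcard' : O.card = d := by exact_mod_cast hcard
    apply Finset.eq_univ_of_card
    rw [hcard']
    simp
  have htrans : ∀ x : Fin d, ∃ n : ℕ, (σ ^ n) 0 = x := by
    intro x
    have hx : x ∈ O := by rw [hOuniv]; exact Finset.mem_univ x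
    simpa [hO] using hx
  have hfix : ∀ y, σ y ≠ y := by
    intro y hy
    obtain ⟨n, hn⟩ := htrans y
    have hσ0 : σ 0 = 0 := by
      have h1 : σ ((σ ^ n) 0) = (σ ^ n) 0 := by rw [hn, hy]
      have h2 : σ ((σ ^ n) 0) = (σ ^ n) (σ 0) := by
        rw [← Equiv.Perm.mul_apply, ← Equiv.Perm.mul_apply, ← pow_succ', pow_succ]
      rw [h2] at h1
      exact (σ ^ n).injective h1
    have hall : ∀ k : ℕ, (σ ^ k) 0 = 0 := by
      intro k
      induction k with
      | zero => simp
      | succ k ih => rw [pow_succ', Equiv.Perm.mul_apply, ih, hσ0]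
    obtain ⟨n1, hn1⟩ := htrans ⟨1, by omega⟩
    rw [hall n1] at hn1
    have hv := congrArg Fin.val hn1
    simp at hv
  have hcyc : σ.IsCycle := by
    refine ⟨0, hfix 0, fun y _ => ?_⟩
    obtain ⟨n, hn⟩ := htrans y
    exact ⟨(n : ℤ), by rw [zpow_natCast]; exact hn⟩
  have hsupσ : σ.support = Finset.univ := by
    ext x
    simp [Equiv.Perm.mem_support, hfix x]
  have hconj : IsConj σ (finRotate d) := by
    refine hcyc.isConj (isCycle_finRotate' hd2) ?_
    rw [hsupσ, support_finRotate' hd2]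
  obtain ⟨c, hc⟩ := isConj_iff.1 hconj
  set θ : Fin d ≃ Fin d := (c⁻¹ : Equiv.Perm (Fin d)) with hθ
  have hθapp : ∀ i, σ (θ i) = θ (finRotate d i) := by
    intro i
    have h1 := congrArg (fun π : Equiv.Perm (Fin d) => π i) hc
    simp only [Equiv.Perm.mul_apply] at h1
    have h2 : c (σ (θ i)) = finRotate d i := h1
    have := congrArg (c⁻¹ : Equiv.Perm (Fin d)) h2
    rw [show ∀ x, c⁻¹ (c x) = x from fun x => Equiv.Perm.inv_eq_iff_eq.mpr rfl] at this
    exact this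
  -- final assembly
  right
  refine ⟨d, hd2, le_refl d, Equiv.refl _, Equiv.refl _,
    ![θ, θ.trans ((μb 0 0).trans (μb 1 0).symm)],
    ![θ.trans (μb 0 0), θ.trans (μb 0 1)], ?_⟩
  intro X Y a b
  have hmod0 : ∀ a' b' : Fin d, ((b'.val + (d - a'.val)) % d = 0 ↔ b' = a') := by
    intro a' b'
    rw [modkey a' b' hd0]
    rw [Nat.add_zero, Nat.mod_eq_of_lt a'.isLt]
    exact ⟨fun h => Fin.ext h, fun h => congrArg Fin.val h⟩
  have hmod1 : ∀ a' b' : Fin d, ((b'.val + (d - a'.val)) % d = 1 ↔ b' = finRotate d a') := by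
    intro a' b'
    rw [modkey a' b' (by omega : 1 < d)]
    constructor
    · intro h
      apply Fin.ext
      rw [h, finRotate_val hd2]
    · intro h
      rw [h, finRotate_val hd2]
  revert a b
  simp only [Equiv.refl_apply]
  fin_cases X <;> fin_cases Y <;> intro a b <;> rw [hval] <;>
    simp only [Fin.mk_zero, Fin.mk_one, Matrix.cons_val_zero, Matrix.cons_val_one,
      Matrix.head_cons, Equiv.trans_apply, Fin.isValue]
  · -- (0,0)
    show (if μb 0 0 (θ b) = μb 0 0 (θ a) then 1/(d:ℝ) else 0)
      = if a.val < d ∧ b.val < d ∧ (b.val + (d - a.val)) % d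
          = (0:Fin 2).val * (0:Fin 2).val then 1/(d:ℝ) else 0
    refine if_congr ?_ rfl rfl
    rw [Equiv.apply_eq_iff_eq, Equiv.apply_eq_iff_eq]
    constructor
    · rintro rfl
      exact ⟨Fin.is_lt _, Fin.is_lt _, (hmod0 _ _).2 rfl⟩
    · rintro ⟨-, -, h⟩
      exact (hmod0 a b).1 h
  · -- (0,1)
    show (if μb 0 1 (θ b) = μb 0 1 (θ a) then 1/(d:ℝ) else 0)
      = if a.val < d ∧ b.val < d ∧ (b.val + (d - a.val)) % d
          = (0:Fin 2).val * (1:Fin 2).val then 1/(d:ℝ) else 0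
    refine if_congr ?_ rfl rfl
    rw [Equiv.apply_eq_iff_eq, Equiv.apply_eq_iff_eq]
    constructor
    · rintro rfl
      exact ⟨Fin.is_lt _, Fin.is_lt _, (hmod0 _ _).2 rfl⟩
    · rintro ⟨-, -, h⟩
      exact (hmod0 a b).1 h
  · -- (1,0)
    show (if μb 0 0 (θ b) = μb 1 0 ((μb 1 0).symm (μb 0 0 (θ a))) then 1/(d:ℝ) else 0)
      = if a.val < d ∧ b.val < d ∧ (b.val + (d - a.val)) % d
          = (1:Fin 2).val * (0:Fin 2).val then 1/(d:ℝ) else 0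
    refine if_congr ?_ rfl rfl
    rw [Equiv.apply_symm_apply, Equiv.apply_eq_iff_eq, Equiv.apply_eq_iff_eq]
    constructor
    · rintro rfl
      exact ⟨Fin.is_lt _, Fin.is_lt _, (hmod0 _ _).2 rfl⟩
    · rintro ⟨-, -, h⟩
      exact (hmod0 a b).1 h
  · -- (1,1)
    show (if μb 0 1 (θ b) = μb 1 1 ((μb 1 0).symm (μb 0 0 (θ a))) then 1/(d:ℝ) else 0)
      = if a.val < d ∧ b.val < d ∧ (b.val + (d - a.val)) % d
          = (1:Fin 2).val * (1:Fin 2).val then 1/(d:ℝ) else 0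
    refine if_congr ?_ rfl rfl
    have hstep : μb 1 1 ((μb 1 0).symm (μb 0 0 (θ a))) = μb 0 1 (σ (θ a)) := by
      rw [hσapp, Equiv.apply_symm_apply]
    rw [hstep, hθapp, Equiv.apply_eq_iff_eq, Equiv.apply_eq_iff_eq]
    constructor
    · rintro rfl
      exact ⟨Fin.is_lt _, Fin.is_lt _, (hmod1 _ _).2 rfl⟩
    · rintro ⟨-, -, h⟩
      exact (hmod1 a b).1 h
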